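/- Uniqueness of the post-intervention solution: let S = (C,V) be an equational state whose induced causal graph is a DAG, and let E be an intervention on a subset of the endogenous variables of S. Then there is a unique state S' = (C',V') such that C' is obtained from C by replacing the equational formulas for the intervened atoms with E, and V' agrees with V on all exogenous variables of S and on all atoms not occurring in C. -/

import Mathlib

/-- Propositional formulas over atoms of type `α`. -/
inductive PForm (α : Type) : Type
  | atom (a : α) : PForm α
  | top : PForm α
  | neg (φ : PForm α) : PForm α
  | conj (φ ψ : PForm α) : PForm α
  | biimp (φ ψ : PForm α) : PForm α

/-- Truth of a propositional formula in a valuation `V`. -/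
def PForm.eval {α : Type} (V : Set α) : PForm α → Prop
  | .atom a => a ∈ V
  | .top => True
  | .neg φ => ¬ φ.eval V
  | .conj φ ψ => φ.eval V ∧ ψ.eval V
  | .biimp φ ψ => (φ.eval V ↔ ψ.eval V)

/-- A state: a causal base together with a compatible valuation. -/
structure State (α : Type) where
  base : Set (PForm α)
  val : Set α
  compat : ∀ ω ∈ base, ω.eval val

/-- `simLE S S'' S'` means `S'' ⪯_S S'` : `S'` is at least as similar to `S` as `S''` is. -/
def simLE {α : Type} (S S'' S' : State α) : Prop :=
  (S.base ∩ S''.base) ⊆ (S.base ∩ S'.base) ∧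
    (symmDiff S.val S'.val) ⊆ (symmDiff S.val S''.val)

/-- `simLT S S' S''` means `S' ≺_S S''`. -/
def simLT {α : Type} (S S' S'' : State α) : Prop :=
  simLE S S' S'' ∧ ¬ simLE S S'' S'

/-- The set of `P`-closest states to `S` relative to context `U`. -/
def Closest {α : Type} (P : Set (State α)) (S : State α) (U : Set (State α)) :
    Set (State α) :=
  {S' ∈ U | S' ∈ P ∧ ¬ ∃ S'' ∈ U, S'' ∈ P ∧ simLT S S' S''}

/-- Atoms occurring in a propositional formula. -/
def PForm.atoms {α : Type} : PForm α → Set α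
  | .atom a => {a}
  | .top => ∅
  | .neg φ => φ.atoms
  | .conj φ ψ => φ.atoms ∪ ψ.atoms
  | .biimp φ ψ => φ.atoms ∪ ψ.atoms

/-- `φ` is an equational formula for the atom `p`. -/
def IsEqFormFor {α : Type} (p : α) (φ : PForm α) : Prop :=
  ∃ ω : PForm α, φ = PForm.biimp (.atom p) ω ∧ p ∉ ω.atoms

/-- An equational state: a finite causal base of equational formulas,
with at most one equational formula per atom. -/
def IsEquationalState {α : Type} (S : State α) : Prop :=
  S.base.Finite ∧ (∀ φ ∈ S.base, ∃ p : α, IsEqFormFor p φ) ∧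
    ∀ (p : α) (ω ω' : PForm α),
      PForm.biimp (.atom p) ω ∈ S.base → PForm.biimp (.atom p) ω' ∈ S.base → ω = ω'

/-- An intervention: a finite set of formulas `p ↔ ⊤` or `p ↔ ⊥`,
with at most one formula per atom. -/
def IsIntervention {α : Type} (E : Set (PForm α)) : Prop :=
  E.Finite ∧
    (∀ φ ∈ E, ∃ p : α,
      φ = PForm.biimp (.atom p) .top ∨ φ = PForm.biimp (.atom p) (.neg .top)) ∧
    ∀ (p : α) (ω ω' : PForm α),
      PForm.biimp (.atom p) ω ∈ E → PForm.biimp (.atom p) ω' ∈ E → ω = ω'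

/-- Atoms intervened upon by `E`. -/
def intervAtoms {α : Type} (E : Set (PForm α)) : Set α :=
  {p | ∃ ω : PForm α, PForm.biimp (.atom p) ω ∈ E}

/-- The post-intervention causal base: remove all equational formulas for the
intervened atoms and add the formulas of `E`. -/
def postBase {α : Type} (C E : Set (PForm α)) : Set (PForm α) :=
  (C \ {φ | ∃ p ∈ intervAtoms E, IsEqFormFor p φ}) ∪ E

/-- Endogenous variables of a state. -/
def endo {α : Type} (S : State α) : Set α :=
  {p | ∃ ω : PForm α, PForm.biimp (.atom p) ω ∈ S.base}

/-- Atoms occurring in the causal base of a state. -/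
def baseAtoms {α : Type} (S : State α) : Set α :=
  {a | ∃ φ ∈ S.base, a ∈ φ.atoms}

/-- Exogenous variables of a state. -/
def exo {α : Type} (S : State α) : Set α := baseAtoms S \ endo S

/-- `q` is a causal parent of `p` in the causal graph of `S`. -/
def parentRel {α : Type} (S : State α) (q p : α) : Prop :=
  ∃ ω : PForm α, PForm.biimp (.atom p) ω ∈ S.base ∧ q ∈ ω.atoms

/-- The causal graph of `S` is a DAG (its edge relation is acyclic). -/
def IsDAG {α : Type} (S : State α) : Prop :=
  ∀ p : α, ¬ Relation.TransGen (parentRel S) p p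

open Classical

lemma PForm.atoms_finite {α : Type} : ∀ φ : PForm α, φ.atoms.Finite
  | .atom a => Set.finite_singleton a
  | .top => Set.finite_empty
  | .neg φ => φ.atoms_finite
  | .conj φ ψ => φ.atoms_finite.union ψ.atoms_finite
  | .biimp φ ψ => φ.atoms_finite.union ψ.atoms_finite

lemma PForm.eval_congr {α : Type} {V W : Set α} :
    ∀ φ : PForm α, (∀ a ∈ φ.atoms, (a ∈ V ↔ a ∈ W)) → (φ.eval V ↔ φ.eval W)
  | .atom a, h => h a (by simp [PForm.atoms])
  | .top, _ => Iff.rfl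
  | .neg φ, h => not_congr (φ.eval_congr h)
  | .conj φ ψ, h =>
      and_congr (φ.eval_congr fun a ha => h a (Or.inl ha))
        (ψ.eval_congr fun a ha => h a (Or.inr ha))
  | .biimp φ ψ, h =>
      iff_congr (φ.eval_congr fun a ha => h a (Or.inl ha))
        (ψ.eval_congr fun a ha => h a (Or.inr ha))

lemma parentRel_mem {α : Type} {S : State α} {q p : α} (h : parentRel S q p) :
    q ∈ baseAtoms S ∧ p ∈ baseAtoms S := by
  obtain ⟨ω, hω, hq⟩ := h
  exact ⟨⟨_, hω, Or.inr hq⟩, ⟨_, hω, Or.inl rfl⟩⟩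

lemma wf_parentRel {α : Type} (S : State α) (hfin : S.base.Finite)
    (hdag : IsDAG S) : WellFounded (parentRel S) := by
  have hA : (baseAtoms S).Finite := by
    have : baseAtoms S = ⋃ φ ∈ S.base, φ.atoms := by
      ext a; simp [baseAtoms]
    rw [this]
    exact hfin.biUnion fun φ _ => φ.atoms_finite
  haveI := hA.to_subtype
  let r' : baseAtoms S → baseAtoms S → Prop := fun q p => parentRel S q.val p.val
  have hlift : ∀ {x y : baseAtoms S}, Relation.TransGen r' x y →
      Relation.TransGen (parentRel S) x.val y.val := fun h =>
    Relation.TransGen.lift (r := r') (p := parentRel S) Subtype.val (fun _ _ h => h) _ _ h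
  haveI : IsIrrefl (baseAtoms S) (Relation.TransGen r') :=
    ⟨fun x hx => hdag x.val (hlift hx)⟩
  have hwf' : WellFounded r' :=
    Subrelation.wf (fun h => Relation.TransGen.single h)
      (Finite.wellFounded_of_trans_of_irrefl (Relation.TransGen r'))
  constructor
  intro p
  by_cases hp : p ∈ baseAtoms S
  · have key : ∀ x : baseAtoms S, Acc (parentRel S) x.val := by
      intro x
      induction x using hwf'.induction with
      | _ x ih =>
        constructor
        intro q hq
        exact ih ⟨q, (parentRel_mem hq).1⟩ hq
    exact key ⟨p, hp⟩
  · exact ⟨p, fun q hq => absurd (parentRel_mem hq).2 hp⟩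

/-- The recursion step defining the post-intervention valuation. -/
noncomputable def Fdef {α : Type} (S : State α) (E : Set (PForm α)) (p : α)
    (rec : ∀ q, parentRel S q p → Prop) : Prop :=
  if PForm.biimp (.atom p) .top ∈ E then True
  else if PForm.biimp (.atom p) (.neg .top) ∈ E then False
  else if h : ∃ ω, PForm.biimp (.atom p) ω ∈ S.base then
    h.choose.eval {q | ∃ h' : parentRel S q p, rec q h'}
  else p ∈ S.val

lemma State_ext {α : Type} {S T : State α} (h1 : S.base = T.base)
    (h2 : S.val = T.val) : S = T := by
  cases S; cases T
  dsimp at h1 h2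
  subst h1; subst h2
  rfl

theorem unique_post_intervention_solution {α : Type} (S : State α)
    (E : Set (PForm α)) (hS : IsEquationalState S) (hdag : IsDAG S)
    (hE : IsIntervention E) (hEendo : intervAtoms E ⊆ endo S) :
    ∃! S' : State α, S'.base = postBase S.base E ∧
      ∀ p : α, (p ∈ exo S ∨ p ∉ baseAtoms S) → (p ∈ S'.val ↔ p ∈ S.val) := by
  obtain ⟨hfin, hforms, huniq⟩ := hS
  have hwf := wf_parentRel S hfin hdag
  set W : Set α := {p | hwf.fix (Fdef S E) p} with hW
  have hfix : ∀ p : α, (p ∈ W) = Fdef S E p (fun q _ => q ∈ W) := fun p =>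
    hwf.fix_eq (Fdef S E) p
  -- shapes of formulas in E
  have hEshape : ∀ {p : α} {ω : PForm α}, PForm.biimp (.atom p) ω ∈ E →
      ω = .top ∨ ω = .neg .top := by
    intro p ω hmem
    obtain ⟨p', hp'⟩ := hE.2.1 _ hmem
    rcases hp' with h | h <;> [left; right] <;>
      · injection h with h1 h2
  have hnotboth : ∀ {p : α}, PForm.biimp (.atom p) (.neg .top) ∈ E →
      PForm.biimp (.atom p) .top ∉ E := by
    intro p h1 h2
    have := hE.2.2 p _ _ h2 h1
    cases this
  -- characterizations of W
  have hWtop : ∀ {p : α}, PForm.biimp (.atom p) .top ∈ E → p ∈ W := by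
    intro p hp
    have := hfix p
    rw [this, Fdef, if_pos hp]
    trivial
  have hWbot : ∀ {p : α}, PForm.biimp (.atom p) (.neg .top) ∈ E → p ∉ W := by
    intro p hp hmem
    rw [hfix p, Fdef, if_neg (hnotboth hp), if_pos hp] at hmem
    exact hmem
  have hnotint : ∀ {p : α}, p ∉ intervAtoms E →
      PForm.biimp (.atom p) .top ∉ E ∧ PForm.biimp (.atom p) (.neg .top) ∉ E := by
    intro p hp
    exact ⟨fun h => hp ⟨_, h⟩, fun h => hp ⟨_, h⟩⟩
  have hWeqn : ∀ {p : α} {ω : PForm α}, p ∉ intervAtoms E →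
      PForm.biimp (.atom p) ω ∈ S.base → (p ∈ W ↔ ω.eval W) := by
    intro p ω hp hω
    have hex : ∃ ω', PForm.biimp (.atom p) ω' ∈ S.base := ⟨ω, hω⟩
    have hch : hex.choose = ω := huniq p _ _ hex.choose_spec hω
    rw [show (p ∈ W) = _ from hfix p, Fdef, if_neg (hnotint hp).1,
      if_neg (hnotint hp).2, dif_pos hex, hch]
    apply PForm.eval_congr
    intro q hq
    have hpar : parentRel S q p := ⟨ω, hω, hq⟩
    simp only [Set.mem_setOf_eq]
    exact ⟨fun ⟨_, h⟩ => h, fun h => ⟨hpar, h⟩⟩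
  have hWexo : ∀ {p : α}, p ∉ intervAtoms E →
      (¬ ∃ ω, PForm.biimp (.atom p) ω ∈ S.base) → (p ∈ W ↔ p ∈ S.val) := by
    intro p hp hne
    rw [show (p ∈ W) = _ from hfix p, Fdef, if_neg (hnotint hp).1,
      if_neg (hnotint hp).2, dif_neg hne]
  -- removal criterion
  have hkeep : ∀ {p : α} {ω : PForm α}, p ∉ intervAtoms E →
      PForm.biimp (.atom p) ω ∈ S.base →
      PForm.biimp (.atom p) ω ∈ postBase S.base E := by
    intro p ω hp hω
    left
    refine ⟨hω, ?_⟩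
    rintro ⟨p', hp', ω', heq, -⟩
    injection heq with h1 h2
    injection h1 with h1
    subst h1
    exact hp hp'
  -- compatibility of W with the new base
  have hcompat : ∀ φ ∈ postBase S.base E, φ.eval W := by
    intro φ hφ
    rcases hφ with ⟨hC, hnr⟩ | hφE
    · obtain ⟨p, ω, rfl, hpω⟩ := hforms φ hC
      have hp : p ∉ intervAtoms E := fun hmem => hnr ⟨p, hmem, ω, rfl, hpω⟩
      exact hWeqn hp hC
    · obtain ⟨p, hsh⟩ := hE.2.1 _ hφE
      rcases hsh with rfl | rfl
      · simpa [PForm.eval] using hWtop hφE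
      · have := hWbot hφE
        simp [PForm.eval, this]
  refine ⟨⟨postBase S.base E, W, hcompat⟩, ⟨rfl, ?_⟩, ?_⟩
  · -- agreement
    intro p hp
    have hnend : p ∉ endo S := by
      rcases hp with hp | hp
      · exact hp.2
      · exact fun ⟨ω, hω⟩ => hp ⟨_, hω, Or.inl rfl⟩
    have hpint : p ∉ intervAtoms E := fun h => hnend (hEendo h)
    exact hWexo hpint hnend
  · -- uniqueness
    rintro T ⟨hTbase, hTagree⟩
    apply State_ext hTbase
    apply Set.ext
    intro p
    induction p using hwf.induction with
    | _ p ih =>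
      show p ∈ T.val ↔ p ∈ W
      by_cases h1 : PForm.biimp (.atom p) .top ∈ E
      · have hin : PForm.biimp (.atom p) .top ∈ T.base := by
          rw [hTbase]; exact Or.inr h1
        have := T.compat _ hin
        simp only [PForm.eval] at this
        simp [this, hWtop h1]
      · by_cases h2 : PForm.biimp (.atom p) (.neg .top) ∈ E
        · have hin : PForm.biimp (.atom p) (.neg .top) ∈ T.base := by
            rw [hTbase]; exact Or.inr h2
          have := T.compat _ hin
          simp only [PForm.eval] at this
          simp only [not_true] at this
          simp [this.symm.mpr, hWbot h2]
          intro h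
          exact absurd h (this.symm.mpr)
        · have hpint : p ∉ intervAtoms E := by
            rintro ⟨ω, hω⟩
            rcases hEshape hω with rfl | rfl
            · exact h1 hω
            · exact h2 hω
          by_cases h3 : ∃ ω, PForm.biimp (.atom p) ω ∈ S.base
          · obtain ⟨ω, hω⟩ := h3
            have hin : PForm.biimp (.atom p) ω ∈ T.base := by
              rw [hTbase]; exact hkeep hpint hω
            have hT := T.compat _ hin
            simp only [PForm.eval] at hT
            rw [hT, hWeqn hpint hω]
            exact PForm.eval_congr ω fun q hq => ih q ⟨ω, hω, hq⟩
          · have hnend : p ∈ exo S ∨ p ∉ baseAtoms S := by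
              by_cases hb : p ∈ baseAtoms S
              · exact Or.inl ⟨hb, h3⟩
              · exact Or.inr hb
            rw [hTagree p hnend, hWexo hpint h3]
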